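/- Starting from the all-zero policy (S_j = 0 for all 1 ≤ j ≤ n), the simple policy improvement algorithm performs exactly 2^n − 1 steps before reaching a policy with no switchable vertex, and the terminal policy satisfies S_1 = 1 and S_j = 0 for all 2 ≤ j ≤ n. In particular this holds for every choice of probabilities p_1, …, p_n in the open interval (0,1) and every cost c > 0. -/

import Mathlib

/-- The value difference at min-vertex k in the Melekopoglou–Condon basic graph,
via the product formula: diff_1 = −p_1·c and diff_k = diff_1 · ∏_{i=2}^k (p_i − S_{i−1}). -/
noncomputable def diffMC (p : ℕ → ℝ) (c : ℝ) (S : ℕ → ℕ) (k : ℕ) : ℝ :=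
  (-(p 1) * c) * ∏ i ∈ Finset.Icc 2 k, (p i - (S (i - 1) : ℝ))

/-- Vertex k ∈ {1,…,n} is switchable under policy S iff S_k = 0 and diff_k < 0,
or S_k = 1 and diff_k > 0. -/
def switchableMC (n : ℕ) (p : ℕ → ℝ) (c : ℝ) (S : ℕ → ℕ) (k : ℕ) : Prop :=
  1 ≤ k ∧ k ≤ n ∧
    ((S k = 0 ∧ diffMC p c S k < 0) ∨ (S k = 1 ∧ 0 < diffMC p c S k))

/-- One step of the simple policy improvement algorithm from S to T flipping
vertex m: m is the highest-numbered switchable vertex under S, and T is S with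
bit m flipped. -/
def simpleStepMC (n : ℕ) (p : ℕ → ℝ) (c : ℝ) (S T : ℕ → ℕ) (m : ℕ) : Prop :=
  switchableMC n p c S m ∧ (∀ j, switchableMC n p c S j → j ≤ m) ∧
    ∀ j, T j = if j = m then 1 - S j else S j

def bitMC (v e : ℕ) : ℕ := if v.testBit e then 1 else 0

lemma bitMC_le_one (v e : ℕ) : bitMC v e ≤ 1 := by unfold bitMC; split <;> omega

lemma testBit_eq_of_mod {x j i : ℕ} (h : i < j) : x.testBit i = (x % 2 ^ j).testBit i := by
  rw [Nat.testBit_mod_two_pow]; simp [h]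

lemma mod_two_pow_succ_eq {v e0 : ℕ} (h0 : v.testBit e0 = true)
    (hmin : ∀ e < e0, v.testBit e = false) : v % 2 ^ (e0 + 1) = 2 ^ e0 := by
  apply Nat.eq_of_testBit_eq
  intro i
  rw [Nat.testBit_mod_two_pow, Nat.testBit_two_pow]
  rcases lt_trichotomy i e0 with h | rfl | h
  · have h1 : ¬ (e0 = i) := by omega
    simp [hmin i h, h1, Nat.lt_succ_of_lt h]
  · simp [h0, Nat.lt_succ_self]
  · have h1 : ¬ (i < e0 + 1) := by omega
    have h2 : ¬ (e0 = i) := by omega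
    simp [h1, h2]

lemma testBit_sub_one {v e0 : ℕ} (h0 : v.testBit e0 = true)
    (hmin : ∀ e < e0, v.testBit e = false) (e : ℕ) :
    (v - 1).testBit e = if e ≤ e0 then !v.testBit e else v.testBit e := by
  have hmod : v % 2 ^ (e0 + 1) = 2 ^ e0 := mod_two_pow_succ_eq h0 hmin
  have hdm := Nat.div_add_mod v (2 ^ (e0 + 1))
  set q := v / 2 ^ (e0 + 1) with hq
  have hp : 0 < 2 ^ e0 := Nat.pow_pos (by norm_num)
  have hv : v = 2 ^ (e0 + 1) * q + 2 ^ e0 := by omega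
  have hv1 : v - 1 = 2 ^ (e0 + 1) * q + (2 ^ e0 - 1) := by omega
  by_cases he : e ≤ e0
  · have h1 : (v - 1).testBit e = (2 ^ e0 - 1).testBit e := by
      have hm : (v - 1) % 2 ^ (e0 + 1) = 2 ^ e0 - 1 := by
        rw [hv1, Nat.mul_add_mod]
        exact Nat.mod_eq_of_lt (by omega)
      rw [testBit_eq_of_mod (x := v - 1) (by omega : e < e0 + 1), hm]
    have h2 : v.testBit e = (2 ^ e0).testBit e := by
      rw [testBit_eq_of_mod (x := v) (by omega : e < e0 + 1), hmod]
    rw [h1, h2, Nat.testBit_two_pow_sub_one, Nat.testBit_two_pow]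
    simp only [if_pos he]
    rcases eq_or_lt_of_le he with rfl | hlt
    · simp
    · have h3 : ¬ (e0 = e) := by omega
      simp [hlt, h3]
  · have hdiv : (v - 1) / 2 ^ e = v / 2 ^ e := by
      have hee : 2 ^ e = 2 ^ (e0 + 1) * 2 ^ (e - (e0 + 1)) := by
        rw [← pow_add]; congr 1; omega
      have d1 : (v - 1) / 2 ^ (e0 + 1) = q := by
        rw [hv1, Nat.mul_add_div (by positivity), Nat.div_eq_of_lt (by omega)]; omega
      have d2 : v / 2 ^ (e0 + 1) = q := hq.symm
      rw [hee, ← Nat.div_div_eq_div_mul, ← Nat.div_div_eq_div_mul, d1, d2]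
    rw [Nat.testBit_eq_decide_div_mod_eq, Nat.testBit_eq_decide_div_mod_eq, hdiv, if_neg he]

/-- The policy at "counter value" v. -/
def PfunMC (n v j : ℕ) : ℕ :=
  if j = 1 then 1 - bitMC v (n - 1)
  else if 2 ≤ j ∧ j ≤ n then (bitMC v (n - j) + bitMC v (n - j + 1)) % 2
  else 0

lemma PfunMC_le_one (n v j : ℕ) : PfunMC n v j ≤ 1 := by
  unfold PfunMC
  have := bitMC_le_one v (n - 1)
  split
  · omega
  · split
    · omega
    · omega

lemma prefix_sum_MC (n v : ℕ) : ∀ k, 1 ≤ k → k ≤ n →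
    (∑ i ∈ Finset.Icc 1 k, PfunMC n v i) % 2 = 1 - bitMC v (n - k) := by
  intro k hk
  induction k, hk using Nat.le_induction with
  | base =>
    intro _
    have h1 := bitMC_le_one v (n - 1)
    simp [PfunMC]
  | succ k hk IH =>
    intro hk1
    rw [Finset.sum_Icc_succ_top (by omega : 1 ≤ k + 1)]
    have hP : PfunMC n v (k + 1) = (bitMC v (n - (k+1)) + bitMC v (n - (k+1) + 1)) % 2 := by
      unfold PfunMC
      rw [if_neg (by omega), if_pos ⟨by omega, hk1⟩]
    have hnk : n - (k + 1) + 1 = n - k := by omega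
    have hIH := IH (by omega)
    have b1 := bitMC_le_one v (n - (k+1))
    have b2 := bitMC_le_one v (n - k)
    rw [hP, hnk]
    omega



lemma diff_sign (n : ℕ) (p : ℕ → ℝ) (c : ℝ)
    (hp : ∀ i, 1 ≤ i → i ≤ n → p i ∈ Set.Ioo (0 : ℝ) 1) (hc : 0 < c)
    (S : ℕ → ℕ) (hS : ∀ i, S i ≤ 1) :
    ∀ k, 1 ≤ k → k ≤ n →
      (diffMC p c S k < 0 ↔ Even (∑ i ∈ Finset.Icc 1 (k - 1), S i)) ∧
      (0 < diffMC p c S k ↔ Odd (∑ i ∈ Finset.Icc 1 (k - 1), S i)) := by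
  intro k hk
  induction k, hk using Nat.le_induction with
  | base =>
    intro _
    have hp1 := hp 1 le_rfl (by omega)
    have hp11 := hp1.1
    have hd : diffMC p c S 1 < 0 := by
      unfold diffMC
      rw [show Finset.Icc 2 1 = (∅ : Finset ℕ) by rfl]
      simp
      nlinarith
    have hsum : (∑ i ∈ Finset.Icc 1 (1 - 1), S i) = 0 := by simp
    rw [hsum]
    constructor
    · exact ⟨fun _ => Even.zero, fun _ => hd⟩
    · constructor
      · intro h; linarith
      · intro h; simp [Nat.odd_iff] at h
  | succ k hk IH =>
    intro hk1
    obtain ⟨k', rfl⟩ : ∃ k', k = k' + 1 := ⟨k - 1, by omega⟩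
    have hIH := IH (by omega)
    simp only [Nat.add_sub_cancel] at hIH ⊢
    have hd : diffMC p c S (k' + 1 + 1)
        = diffMC p c S (k' + 1) * (p (k' + 1 + 1) - (S (k' + 1) : ℝ)) := by
      unfold diffMC
      rw [Finset.prod_Icc_succ_top (by omega : 2 ≤ k' + 1 + 1)]
      simp only [Nat.add_sub_cancel]
      ring
    have hsum : (∑ i ∈ Finset.Icc 1 (k' + 1), S i)
        = (∑ i ∈ Finset.Icc 1 k', S i) + S (k' + 1) :=
      Finset.sum_Icc_succ_top (by omega) S
    have hpk := hp (k' + 1 + 1) (by omega) hk1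
    have hdichot : diffMC p c S (k' + 1) < 0 ∨ 0 < diffMC p c S (k' + 1) := by
      rcases Nat.even_or_odd (∑ i ∈ Finset.Icc 1 k', S i) with h | h
      · exact Or.inl (hIH.1.mpr h)
      · exact Or.inr (hIH.2.mpr h)
    have hcase : S (k' + 1) = 0 ∨ S (k' + 1) = 1 := by have := hS (k' + 1); omega
    rcases hcase with h1 | h1
    · -- factor positive
      rw [h1] at hd
      push_cast at hd
      have hfac : (0:ℝ) < p (k' + 1 + 1) := hpk.1
      have hEv : Even (∑ i ∈ Finset.Icc 1 (k' + 1), S i)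
          ↔ Even (∑ i ∈ Finset.Icc 1 k', S i) := by rw [hsum, h1, Nat.add_zero]
      have hOd : Odd (∑ i ∈ Finset.Icc 1 (k' + 1), S i)
          ↔ Odd (∑ i ∈ Finset.Icc 1 k', S i) := by rw [hsum, h1, Nat.add_zero]
      constructor
      · rw [hEv, ← hIH.1, hd]
        constructor
        · intro h
          rcases hdichot with h' | h'
          · exact h'
          · nlinarith
        · intro h; nlinarith
      · rw [hOd, ← hIH.2, hd]
        constructor
        · intro h
          rcases hdichot with h' | h'
          · nlinarith
          · exact h'
        · intro h; nlinarith
    · -- factor negative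
      rw [h1] at hd
      push_cast at hd
      have hfac : p (k' + 1 + 1) - 1 < 0 := by have := hpk.2; linarith
      have hEv : Even (∑ i ∈ Finset.Icc 1 (k' + 1), S i)
          ↔ Odd (∑ i ∈ Finset.Icc 1 k', S i) := by
        rw [hsum, h1, Nat.even_add_one, Nat.not_even_iff_odd]
      have hOd : Odd (∑ i ∈ Finset.Icc 1 (k' + 1), S i)
          ↔ Even (∑ i ∈ Finset.Icc 1 k', S i) := by
        rw [hsum, h1, Nat.odd_add_one, Nat.not_odd_iff_even]
      constructor
      · rw [hEv, ← hIH.2, hd]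
        constructor
        · intro h
          rcases hdichot with h' | h'
          · nlinarith
          · exact h'
        · intro h; nlinarith
      · rw [hOd, ← hIH.1, hd]
        constructor
        · intro h
          rcases hdichot with h' | h'
          · exact h'
          · nlinarith
        · intro h; nlinarith

lemma switch_iff (n : ℕ) (p : ℕ → ℝ) (c : ℝ)
    (hp : ∀ i, 1 ≤ i → i ≤ n → p i ∈ Set.Ioo (0 : ℝ) 1) (hc : 0 < c) (v k : ℕ) :
    switchableMC n p c (PfunMC n v) k ↔ (1 ≤ k ∧ k ≤ n ∧ v.testBit (n - k) = true) := by
  unfold switchableMC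
  constructor
  · rintro ⟨hk1, hkn, hcond⟩
    refine ⟨hk1, hkn, ?_⟩
    have hds := diff_sign n p c hp hc (PfunMC n v) (fun i => PfunMC_le_one n v i) k hk1 hkn
    have hpre := prefix_sum_MC n v k hk1 hkn
    obtain ⟨k', rfl⟩ : ∃ k', k = k' + 1 := ⟨k - 1, by omega⟩
    simp only [Nat.add_sub_cancel] at hds
    have hsum := Finset.sum_Icc_succ_top (show 1 ≤ k' + 1 by omega) (PfunMC n v)
    have hble := bitMC_le_one v (n - (k' + 1))
    have hbit : v.testBit (n - (k' + 1)) = true ↔ bitMC v (n - (k' + 1)) = 1 := by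
      unfold bitMC; split <;> simp_all
    rw [hbit]
    rcases hcond with ⟨h0, hdiff⟩ | ⟨h0, hdiff⟩
    · have hE := Nat.even_iff.mp (hds.1.mp hdiff)
      omega
    · have hO := Nat.odd_iff.mp (hds.2.mp hdiff)
      omega
  · rintro ⟨hk1, hkn, ht⟩
    refine ⟨hk1, hkn, ?_⟩
    have hds := diff_sign n p c hp hc (PfunMC n v) (fun i => PfunMC_le_one n v i) k hk1 hkn
    have hpre := prefix_sum_MC n v k hk1 hkn
    obtain ⟨k', rfl⟩ : ∃ k', k = k' + 1 := ⟨k - 1, by omega⟩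
    simp only [Nat.add_sub_cancel] at hds
    have hsum := Finset.sum_Icc_succ_top (show 1 ≤ k' + 1 by omega) (PfunMC n v)
    have hble := bitMC_le_one v (n - (k' + 1))
    have hb1 : bitMC v (n - (k' + 1)) = 1 := by unfold bitMC; simp [ht]
    have hS := PfunMC_le_one n v (k' + 1)
    rcases (by omega : PfunMC n v (k' + 1) = 0 ∨ PfunMC n v (k' + 1) = 1) with h1 | h1
    · exact Or.inl ⟨h1, hds.1.mpr (Nat.even_iff.mpr (by omega))⟩
    · exact Or.inr ⟨h1, hds.2.mpr (Nat.odd_iff.mpr (by omega))⟩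

lemma Pfun_step (n v e0 : ℕ) (h0 : v.testBit e0 = true)
    (hmin : ∀ e < e0, v.testBit e = false) (he0 : e0 < n) (j : ℕ) :
    PfunMC n (v - 1) j = if j = n - e0 then 1 - PfunMC n v j else PfunMC n v j := by
  have hb : ∀ e, bitMC (v - 1) e = if e ≤ e0 then 1 - bitMC v e else bitMC v e := by
    intro e
    unfold bitMC
    rw [testBit_sub_one h0 hmin e]
    by_cases h : e ≤ e0 <;> cases hte : v.testBit e <;> simp [h, hte]
  by_cases hj1 : j = 1
  · subst hj1
    have e1 : PfunMC n (v - 1) 1 = 1 - bitMC (v - 1) (n - 1) := by unfold PfunMC; simp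
    have e2 : PfunMC n v 1 = 1 - bitMC v (n - 1) := by unfold PfunMC; simp
    have hble := bitMC_le_one v (n - 1)
    rw [e1, e2, hb (n - 1)]
    split_ifs <;> omega
  · by_cases hj : 2 ≤ j ∧ j ≤ n
    · have e1 : PfunMC n (v - 1) j
          = (bitMC (v - 1) (n - j) + bitMC (v - 1) (n - j + 1)) % 2 := by
        unfold PfunMC; rw [if_neg hj1, if_pos hj]
      have e2 : PfunMC n v j = (bitMC v (n - j) + bitMC v (n - j + 1)) % 2 := by
        unfold PfunMC; rw [if_neg hj1, if_pos hj]
      have a1 := bitMC_le_one v (n - j)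
      have a2 := bitMC_le_one v (n - j + 1)
      rw [e1, e2, hb (n - j), hb (n - j + 1)]
      obtain ⟨hj2, hjn⟩ := hj
      split_ifs <;> omega
    · have e1 : PfunMC n (v - 1) j = 0 := by unfold PfunMC; rw [if_neg hj1, if_neg hj]
      have e2 : PfunMC n v j = 0 := by unfold PfunMC; rw [if_neg hj1, if_neg hj]
      rw [e1, e2, if_neg (by omega : ¬ j = n - e0)]

/-- Exponential lower bound for Simple PI on the basic graph, robust under any
probabilities in (0,1) and any positive cost: starting from the all-zero
policy, the simple policy improvement algorithm performs exactly 2^n − 1 steps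
before reaching a policy with no switchable vertex, and the terminal policy
has S_1 = 1 and S_j = 0 for all 2 ≤ j ≤ n. -/
theorem simplePI_exponential (n : ℕ) (hn : 1 ≤ n)
    (p : ℕ → ℝ) (c : ℝ)
    (hp : ∀ i, 1 ≤ i → i ≤ n → p i ∈ Set.Ioo (0 : ℝ) 1) (hc : 0 < c) :
    ∃ (P : ℕ → ℕ → ℕ) (m : ℕ → ℕ),
      P 0 = (fun _ => 0) ∧
      (∀ t, t < 2 ^ n - 1 → simpleStepMC n p c (P t) (P (t + 1)) (m t)) ∧
      (∀ j, ¬ switchableMC n p c (P (2 ^ n - 1)) j) ∧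
      P (2 ^ n - 1) 1 = 1 ∧
      (∀ j, 2 ≤ j → j ≤ n → P (2 ^ n - 1) j = 0) := by
  classical
  have h2n : 2 ≤ 2 ^ n := by
    calc 2 = 2 ^ 1 := (pow_one 2).symm
    _ ≤ 2 ^ n := Nat.pow_le_pow_right (by norm_num) hn
  refine ⟨fun t => PfunMC n (2 ^ n - 1 - t),
    fun t => if h : ∃ e, (2 ^ n - 1 - t).testBit e = true then n - Nat.find h else 0,
    ?_, ?_, ?_, ?_, ?_⟩
  · -- initial policy is all-zero
    funext j
    show PfunMC n (2 ^ n - 1 - 0) j = 0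
    rw [Nat.sub_zero]
    have hb : ∀ e, e < n → bitMC (2 ^ n - 1) e = 1 := by
      intro e he
      unfold bitMC
      rw [Nat.testBit_two_pow_sub_one]
      simp [he]
    unfold PfunMC
    split_ifs with h1 h2
    · have := hb (n - 1) (by omega)
      omega
    · have b1 := hb (n - j) (by omega)
      have b2 := hb (n - j + 1) (by omega)
      omega
    · rfl
  · -- the 2^n - 1 improvement steps
    intro t ht
    set v := 2 ^ n - 1 - t with hveq
    have hv1 : 1 ≤ v := by omega
    have hvlt : v < 2 ^ n := by omega
    have hex : ∃ e, v.testBit e = true := by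
      by_contra h
      push_neg at h
      simp only [Bool.not_eq_true] at h
      have : v = 0 := Nat.eq_of_testBit_eq fun i => by rw [h i, Nat.zero_testBit]
      omega
    have h0 : v.testBit (Nat.find hex) = true := Nat.find_spec hex
    set e0 := Nat.find hex with he0eq
    have hmin : ∀ e < e0, v.testBit e = false := by
      intro e he
      have := Nat.find_min hex he
      simpa using this
    have he0n : e0 < n := by
      by_contra hcon
      push_neg at hcon
      have hvl : v < 2 ^ e0 :=
        lt_of_lt_of_le hvlt (Nat.pow_le_pow_right (by norm_num) hcon)
      rw [Nat.testBit_lt_two_pow hvl] at h0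
      exact absurd h0 (by simp)
    have hm : (if h : ∃ e, (2 ^ n - 1 - t).testBit e = true then n - Nat.find h else 0)
        = n - e0 := by
      rw [← hveq, dif_pos hex]
    rw [show ((fun t => if h : ∃ e, (2 ^ n - 1 - t).testBit e = true
        then n - Nat.find h else 0) t) = n - e0 from hm]
    have hvsucc : 2 ^ n - 1 - (t + 1) = v - 1 := by omega
    show simpleStepMC n p c (PfunMC n v) (PfunMC n (2 ^ n - 1 - (t + 1))) (n - e0)
    rw [hvsucc]
    refine ⟨?_, ?_, ?_⟩
    · rw [switch_iff n p c hp hc]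
      refine ⟨by omega, by omega, ?_⟩
      rw [show n - (n - e0) = e0 by omega]
      exact h0
    · intro j hj
      rw [switch_iff n p c hp hc] at hj
      obtain ⟨hj1, hjn, hbit⟩ := hj
      have hle : e0 ≤ n - j := Nat.find_le hbit
      omega
    · intro j
      exact Pfun_step n v e0 h0 hmin he0n j
  · -- terminal policy has no switchable vertex
    intro j hj
    simp only [Nat.sub_self] at hj
    rw [switch_iff n p c hp hc, Nat.zero_testBit] at hj
    exact absurd hj.2.2 (by simp)
  · -- terminal policy: S_1 = 1
    show PfunMC n (2 ^ n - 1 - (2 ^ n - 1)) 1 = 1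
    rw [Nat.sub_self]
    unfold PfunMC bitMC
    simp [Nat.zero_testBit]
  · -- terminal policy: S_j = 0 for 2 ≤ j ≤ n
    intro j hj2 hjn
    show PfunMC n (2 ^ n - 1 - (2 ^ n - 1)) j = 0
    rw [Nat.sub_self]
    unfold PfunMC bitMC
    rw [if_neg (by omega), if_pos ⟨hj2, hjn⟩]
    simp [Nat.zero_testBit]
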